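/- (Proposition 1.) For every δ > 0 and every discount factor 0 < γ < 1, there exist reward functions R*, R̂ : S → ℝ and policies π_E, π1, π2 on the four-state MDP such that: (i) π_E maximizes V(R*, ·) over all policies; (ii) π_E also maximizes V(R̂, ·) over all policies; (iii) V(R*, π1) = −δγ/(1 − γ) < 0 = V(R*, π2), so π1 is arbitrarily worse than π2 under the true reward as δ grows; and (iv) V(R̂, π1) = V(R̂, π2). Concretely, one may take R* = (0, −δ, 1, 0), R̂ = (0, 0, 1, 0) on (s0, s1, s2, s3), π_E(s0) = b, π1(s0) = a, π2(s0) = c. -/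
import Mathlib


/-- Deterministic transition function: from `s0 = 0`, action `a : Fin 3`
leads to state `a.succ` (i.e. `a ↦ s1`, `b ↦ s2`, `c ↦ s3`); every other
state is fixed under every action. -/
def P (s : Fin 4) (a : Fin 3) : Fin 4 := if s = 0 then a.succ else s

/-- Trajectory of policy `π` started at `s0 = 0`. -/
def traj (π : Fin 4 → Fin 3) (t : ℕ) : Fin 4 := (fun s => P s (π s))^[t] 0

/-- Discounted value of policy `π` from `s0 = 0` under reward `R` and discount `γ`. -/
noncomputable def V (R : Fin 4 → ℝ) (γ : ℝ) (π : Fin 4 → Fin 3) : ℝ :=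
  ∑' t : ℕ, γ ^ t * R (traj π t)

lemma traj_succ (π : Fin 4 → Fin 3) (t : ℕ) : traj π (t + 1) = (π 0).succ := by
  induction t with
  | zero => simp [traj, P]
  | succ n ih =>
      have : traj π (n + 1 + 1) = P (traj π (n + 1)) (π (traj π (n + 1))) := by
        simp [traj, Function.iterate_succ_apply']
      rw [this, ih]
      simp [P, Fin.succ_ne_zero]

lemma V_eq (R : Fin 4 → ℝ) (γ : ℝ) (hγ0 : 0 < γ) (hγ1 : γ < 1) (π : Fin 4 → Fin 3) :
    V R γ π = R 0 + γ * (1 - γ)⁻¹ * R ((π 0).succ) := by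
  have hsum : Summable (fun t : ℕ => γ ^ (t + 1) * R ((π 0).succ)) := by
    have := (summable_geometric_of_lt_one hγ0.le hγ1).mul_right (γ * R ((π 0).succ))
    refine this.congr fun t => ?_
    ring
  have hsum' : Summable (fun t : ℕ => γ ^ (t + 1) * R (traj π (t + 1))) := by
    refine hsum.congr fun t => by rw [traj_succ]
  have h0 : V R γ π = γ ^ 0 * R (traj π 0) + ∑' t : ℕ, γ ^ (t + 1) * R (traj π (t + 1)) := by
    exact tsum_eq_zero_add' hsum'
  have htraj0 : traj π 0 = 0 := rfl
  rw [h0, htraj0]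
  have : ∑' t : ℕ, γ ^ (t + 1) * R (traj π (t + 1))
      = ∑' t : ℕ, γ ^ t * (γ * R ((π 0).succ)) := by
    refine tsum_congr fun t => ?_
    rw [traj_succ]; ring
  rw [this, tsum_mul_right, tsum_geometric_of_lt_one hγ0.le hγ1]
  ring

/-- Proposition 1: an IRL-recovered reward under which the expert is
optimal can hide arbitrarily large differences in true value between
non-expert policies. -/
theorem irl_reward_can_hide_differences (δ γ : ℝ) (hδ : 0 < δ)
    (hγ0 : 0 < γ) (hγ1 : γ < 1) :
    ∃ (Rstar Rhat : Fin 4 → ℝ) (πE π1 π2 : Fin 4 → Fin 3),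
      Rstar = ![0, -δ, 1, 0] ∧ Rhat = ![0, 0, 1, 0] ∧
      πE 0 = 1 ∧ π1 0 = 0 ∧ π2 0 = 2 ∧
      (∀ π : Fin 4 → Fin 3, V Rstar γ π ≤ V Rstar γ πE) ∧
      (∀ π : Fin 4 → Fin 3, V Rhat γ π ≤ V Rhat γ πE) ∧
      V Rstar γ π1 = -δ * γ / (1 - γ) ∧
      V Rstar γ π2 = 0 ∧
      V Rstar γ π1 < V Rstar γ π2 ∧
      V Rhat γ π1 = V Rhat γ π2 := by
  have hpos : 0 < 1 - γ := by linarith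
  have hc : 0 ≤ γ * (1 - γ)⁻¹ := by positivity
  refine ⟨![0, -δ, 1, 0], ![0, 0, 1, 0], fun _ => 1, fun _ => 0, fun _ => 2,
    rfl, rfl, rfl, rfl, rfl, ?_, ?_, ?_, ?_, ?_, ?_⟩
  · intro π
    rw [V_eq _ _ hγ0 hγ1, V_eq _ _ hγ0 hγ1]
    have h : ∀ a : Fin 3, (![0, -δ, 1, 0] : Fin 4 → ℝ) a.succ ≤ 1 := by
      intro a; fin_cases a <;> simp <;> linarith
    have := h (π 0)
    simp only [show ((1:Fin 3).succ) = (2:Fin 4) from rfl, Matrix.cons_val_zero,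
      Matrix.cons_val_two, Matrix.tail_cons, Matrix.head_cons]
    nlinarith [mul_le_mul_of_nonneg_left this hc]
  · intro π
    rw [V_eq _ _ hγ0 hγ1, V_eq _ _ hγ0 hγ1]
    have h : ∀ a : Fin 3, (![0, 0, 1, 0] : Fin 4 → ℝ) a.succ ≤ 1 := by
      intro a; fin_cases a <;> simp
    have := h (π 0)
    simp only [show ((1:Fin 3).succ) = (2:Fin 4) from rfl, Matrix.cons_val_zero,
      Matrix.cons_val_two, Matrix.tail_cons, Matrix.head_cons]
    nlinarith [mul_le_mul_of_nonneg_left this hc]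
  · rw [V_eq _ _ hγ0 hγ1]
    show (0:ℝ) + γ * (1-γ)⁻¹ * (-δ) = -δ * γ / (1 - γ)
    rw [div_eq_mul_inv]; ring
  · rw [V_eq _ _ hγ0 hγ1]
    show (0:ℝ) + γ * (1-γ)⁻¹ * 0 = 0
    ring
  · rw [V_eq _ _ hγ0 hγ1, V_eq _ _ hγ0 hγ1]
    show (0:ℝ) + γ * (1-γ)⁻¹ * (-δ) < 0 + γ * (1-γ)⁻¹ * 0
    have : 0 < γ * (1 - γ)⁻¹ := by positivity
    nlinarith
  · rw [V_eq _ _ hγ0 hγ1, V_eq _ _ hγ0 hγ1]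
    simp [show ((0:Fin 3).succ) = (1:Fin 4) from rfl, show ((2:Fin 3).succ) = (3:Fin 4) from rfl]
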